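/- Let (M,g) be a compact Riemannian manifold of dimension n ≥ 3 satisfying for some C > 0 and all σ > 0 the logarithmic Sobolev inequality ∫_M u² ln u² dvol ≤ (σ/4)∫_M(4|∇u|² + Ru²)dvol - (n/2)ln σ + C for all u with ∫u² = 1. Then vol(M) ≥ e^{-1/4 - C} if the average scalar curvature R̂ = (∫R dvol)/vol(M) satisfies R̂ ≤ 0, and vol(M) ≥ e^{-1/4 - C} R̂^{-n/2} if R̂ > 0. -/

import Mathlib

open MeasureTheory Real

/-- Volume lower bound from a uniform logarithmic Sobolev inequality on a compact
Riemannian manifold of dimension `n ≥ 3` (modeled abstractly by a finite measure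
`vol`, a `W^{1,2}` class `W12` containing the constants, a gradient-norm map `grad`
vanishing on constants, and the scalar curvature `R`):  `vol(M) ≥ e^{-1/4 - C}` if the
average scalar curvature `R̂` is nonpositive, and `vol(M) ≥ e^{-1/4 - C} R̂^{-n/2}` if
`R̂ > 0`. -/
theorem volume_bound_of_LSI
    {M : Type*} [MeasurableSpace M] (vol : Measure M) [IsFiniteMeasure vol]
    (n : ℕ) (hn : 3 ≤ n)
    (W12 : Set (M → ℝ)) (grad : (M → ℝ) → (M → ℝ)) (R : M → ℝ)
    (hvol : 0 < (vol Set.univ).toReal) (hR : Integrable R vol)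
    (C : ℝ) (hC : 0 < C)
    (hLSI : ∀ σ : ℝ, 0 < σ → ∀ u ∈ W12, (∫ x, (u x) ^ 2 ∂vol) = 1 →
      (∫ x, (u x) ^ 2 * Real.log ((u x) ^ 2) ∂vol) ≤
        σ / 4 * (∫ x, (4 * (grad u x) ^ 2 + R x * (u x) ^ 2) ∂vol) -
          n / 2 * Real.log σ + C)
    -- the constant function `vol(M)^{-1/2}` is an admissible test function
    (hconst : (fun _ : M => (vol Set.univ).toReal ^ (-(1 : ℝ) / 2)) ∈ W12)
    (hgradconst : ∀ x, grad (fun _ : M => (vol Set.univ).toReal ^ (-(1 : ℝ) / 2)) x = 0) :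
    ((∫ x, R x ∂vol) / (vol Set.univ).toReal ≤ 0 →
        Real.exp (-(1 / 4) - C) ≤ (vol Set.univ).toReal) ∧
      (0 < (∫ x, R x ∂vol) / (vol Set.univ).toReal →
        Real.exp (-(1 / 4) - C) *
            ((∫ x, R x ∂vol) / (vol Set.univ).toReal) ^ (-(n : ℝ) / 2) ≤
          (vol Set.univ).toReal) := by

  have hVpos : 0 < (vol Set.univ).toReal := hvol
  set V := (vol Set.univ).toReal with hV
  have hc2 : (V ^ ((-1:ℝ)/2)) ^ 2 = V⁻¹ := by
    rw [← Real.rpow_natCast (V ^ ((-1:ℝ)/2)) 2, ← Real.rpow_mul hVpos.le]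
    norm_num [Real.rpow_neg_one]
  have hint1 : (∫ x, ((fun _ : M => V ^ (-(1:ℝ)/2)) x) ^ 2 ∂vol) = 1 := by
    simp only [neg_div] at hc2 ⊢
    simp only [hc2, integral_const, smul_eq_mul]
    field_simp
    rfl
  have key : ∀ σ : ℝ, 0 < σ →
      -Real.log V ≤ σ / 4 * ((∫ x, R x ∂vol) / V) - n / 2 * Real.log σ + C := by
    intro σ hσ
    have h := hLSI σ hσ _ hconst hint1
    simp only [neg_div] at hc2
    have hlhs : (∫ x, ((fun _ : M => V ^ (-(1:ℝ)/2)) x) ^ 2 *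
        Real.log (((fun _ : M => V ^ (-(1:ℝ)/2)) x) ^ 2) ∂vol) = -Real.log V := by
      simp only [neg_div, hc2, integral_const, smul_eq_mul, Real.log_inv]
      field_simp
      rw [show vol.real Set.univ = V from rfl]
    have hrhs : (∫ x, (4 * (grad (fun _ : M => V ^ (-(1:ℝ)/2)) x) ^ 2 +
        R x * ((fun _ : M => V ^ (-(1:ℝ)/2)) x) ^ 2) ∂vol) = (∫ x, R x ∂vol) / V := by
      have heq : ∀ x, (4 * (grad (fun _ : M => V ^ (-(1:ℝ)/2)) x) ^ 2 +
          R x * ((fun _ : M => V ^ (-(1:ℝ)/2)) x) ^ 2) = R x * V⁻¹ := by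
        intro x; rw [hgradconst x]; simp only [neg_div, hc2]; ring
      simp only [heq]
      rw [integral_mul_const]
      ring
    rw [hlhs, hrhs] at h
    exact h
  constructor
  · intro hRhat
    have h := key 1 one_pos
    simp only [Real.log_one, mul_zero, sub_zero] at h
    have hlog : -(1/4) - C ≤ Real.log V := by nlinarith
    calc Real.exp (-(1/4) - C) ≤ Real.exp (Real.log V) := Real.exp_le_exp.mpr hlog
    _ = V := Real.exp_log hVpos
  · intro hRhat
    set r := (∫ x, R x ∂vol) / V with hr
    have h := key r⁻¹ (inv_pos.mpr hRhat)
    have h1 : r⁻¹ / 4 * r = 1/4 := by field_simp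
    rw [h1, Real.log_inv] at h
    have hlog : -(1/4) - C + (-(n:ℝ)/2) * Real.log r ≤ Real.log V := by nlinarith
    have heq : Real.exp (-(1/4) - C) * r ^ (-(n:ℝ)/2) =
        Real.exp (-(1/4) - C + (-(n:ℝ)/2) * Real.log r) := by
      rw [Real.rpow_def_of_pos hRhat, ← Real.exp_add]
      ring_nf
    rw [heq]
    calc Real.exp (-(1/4) - C + (-(n:ℝ)/2) * Real.log r)
        ≤ Real.exp (Real.log V) := Real.exp_le_exp.mpr hlog
    _ = V := Real.exp_log hVpos
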